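/- Let r ≥ 1, N ≥ 2, let A_1,…,A_N be r×r complex matrices and t_1,…,t_N pairwise distinct complex numbers. For each pair of indices i, k define the matrix D_{k}H_i by D_kH_i = A_i/(t_i − t_k) for k ≠ i and D_iH_i = Σ_{k≠i} A_k/(t_i − t_k) (the matrix gradients of the Schlesinger Hamiltonian H_i with respect to the trace pairing). Then the Schlesinger Hamiltonians are in involution with respect to the Kostant–Kirillov Poisson bracket: for all i and j, Σ_{k=1}^N Tr( A_k · [D_kH_i, D_kH_j] ) = 0. -/

import Mathlib

open Matrix Finset

lemma tr_cyc {n : Type*} [Fintype n] (X Y Z : Matrix n n ℂ) :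
    (X * ⁅Y, Z⁆).trace = (Z * ⁅X, Y⁆).trace := by
  simp only [Ring.lie_def, Matrix.mul_sub, trace_sub, ← Matrix.mul_assoc]
  rw [Matrix.trace_mul_cycle X Y Z, Matrix.trace_mul_cycle X Z Y,
      Matrix.trace_mul_cycle Y X Z]

lemma mlie_self {n : Type*} [Fintype n] (X : Matrix n n ℂ) : ⁅X, X⁆ = 0 := by
  simp [Ring.lie_def]

lemma msmul_lie {n : Type*} [Fintype n] (c : ℂ) (X Y : Matrix n n ℂ) :
    ⁅c • X, Y⁆ = c • ⁅X, Y⁆ := by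
  simp [Ring.lie_def, smul_sub]

lemma mlie_smul {n : Type*} [Fintype n] (c : ℂ) (X Y : Matrix n n ℂ) :
    ⁅X, c • Y⁆ = c • ⁅X, Y⁆ := by
  simp [Ring.lie_def, smul_sub]

lemma mlie_skew {n : Type*} [Fintype n] (X Y : Matrix n n ℂ) :
    -⁅Y, X⁆ = ⁅X, Y⁆ := by
  simp [Ring.lie_def]

lemma sum_lie' {n α : Type*} [Fintype n] [DecidableEq n] (s : Finset α)
    (f : α → Matrix n n ℂ) (X : Matrix n n ℂ) :
    ⁅∑ a ∈ s, f a, X⁆ = ∑ a ∈ s, ⁅f a, X⁆ := by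
  simp [Ring.lie_def, Finset.sum_mul, Finset.mul_sum, Finset.sum_sub_distrib]

lemma lie_sum' {n α : Type*} [Fintype n] [DecidableEq n] (s : Finset α)
    (f : α → Matrix n n ℂ) (X : Matrix n n ℂ) :
    ⁅X, ∑ a ∈ s, f a⁆ = ∑ a ∈ s, ⁅X, f a⁆ := by
  simp [Ring.lie_def, Finset.sum_mul, Finset.mul_sum, Finset.sum_sub_distrib]

/-- **Involutivity of the Schlesinger Hamiltonians.**
For `r×r` matrices `A₁,…,A_N` and pairwise distinct `t₁,…,t_N`, let `D_kH_i` denote the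
matrix gradient of the Schlesinger Hamiltonian `H_i = Σ_{j≠i} Tr(A_iA_j)/(t_i−t_j)` with
respect to `A_k`: `D_kH_i = A_i/(t_i−t_k)` for `k ≠ i` and
`D_iH_i = Σ_{k≠i} A_k/(t_i−t_k)`. Then the Kostant–Kirillov Poisson bracket
`{H_i,H_j} = Σ_k Tr(A_k [D_kH_i, D_kH_j])` vanishes for all `i, j`. -/
theorem schlesinger_hamiltonians_in_involution
    (r N : ℕ) (hr : 1 ≤ r) (hN : 2 ≤ N)
    (A : Fin N → Matrix (Fin r) (Fin r) ℂ)
    (t : Fin N → ℂ) (ht : ∀ i j : Fin N, i ≠ j → t i ≠ t j)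
    (D : Fin N → Fin N → Matrix (Fin r) (Fin r) ℂ)
    (hD : ∀ i k : Fin N,
      D k i = if k = i then ∑ l ∈ Finset.univ.erase i, (t i - t l)⁻¹ • A l
              else (t i - t k)⁻¹ • A i) :
    ∀ i j : Fin N, ∑ k, Matrix.trace (A k * ⁅D k i, D k j⁆) = 0 := by
  intro i j
  by_cases hij : i = j
  · subst hij; simp [mlie_self]
  · have hji : j ≠ i := Ne.symm hij
    have htij : t i - t j ≠ 0 := sub_ne_zero.2 (ht i j hij)
    have hjmem : j ∈ univ.erase i := mem_erase.2 ⟨hji, mem_univ j⟩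
    rw [← Finset.add_sum_erase _ _ (mem_univ i), ← Finset.add_sum_erase _ _ hjmem]
    -- rewrite D values
    have hDii : D i i = ∑ l ∈ univ.erase i, (t i - t l)⁻¹ • A l := by
      rw [hD i i, if_pos rfl]
    have hDij : D i j = (t j - t i)⁻¹ • A j := by rw [hD j i, if_neg hij]
    have hDji : D j i = (t i - t j)⁻¹ • A i := by rw [hD i j, if_neg hji]
    have hDjj : D j j = ∑ l ∈ univ.erase j, (t j - t l)⁻¹ • A l := by
      rw [hD j j, if_pos rfl]
    rw [hDii, hDij, hDji, hDjj]
    -- expand the k = i term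
    have e1 : (A i * ⁅∑ l ∈ univ.erase i, (t i - t l)⁻¹ • A l,
        (t j - t i)⁻¹ • A j⁆).trace
        = ∑ l ∈ univ.erase i,
            ((t i - t l)⁻¹ * (t j - t i)⁻¹) * (A i * ⁅A l, A j⁆).trace := by
      rw [sum_lie']
      simp only [msmul_lie, mlie_smul, Matrix.mul_sum, trace_sum, mul_smul_comm,
        trace_smul, smul_eq_mul, smul_smul]
      exact Finset.sum_congr rfl fun l _ => by ring
    have e2 : (A j * ⁅(t i - t j)⁻¹ • A i,
        ∑ l ∈ univ.erase j, (t j - t l)⁻¹ • A l⁆).trace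
        = ∑ l ∈ univ.erase j,
            ((t i - t j)⁻¹ * (t j - t l)⁻¹) * (A j * ⁅A i, A l⁆).trace := by
      rw [lie_sum']
      simp only [msmul_lie, mlie_smul, Matrix.mul_sum, trace_sum, mul_smul_comm,
        trace_smul, smul_eq_mul, smul_smul]
      exact Finset.sum_congr rfl fun l _ => by ring
    rw [e1, e2]
    -- split off trivial terms l = j and l = i
    have himem : i ∈ univ.erase j := mem_erase.2 ⟨hij, mem_univ i⟩
    rw [← Finset.add_sum_erase _ _ hjmem, ← Finset.add_sum_erase _ _ himem]
    rw [Finset.erase_right_comm (a := j) (b := i)]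
    simp only [mlie_self, Matrix.mul_zero, trace_zero, mul_zero, zero_add]
    -- now everything is over u := (univ.erase i).erase j
    rw [← Finset.sum_add_distrib, ← Finset.sum_add_distrib]
    apply Finset.sum_eq_zero
    intro l hl
    rw [mem_erase, mem_erase] at hl
    obtain ⟨hlj, hli, -⟩ := hl
    have htil : t i - t l ≠ 0 := sub_ne_zero.2 (ht i l (Ne.symm hli))
    have htjl : t j - t l ≠ 0 := sub_ne_zero.2 (ht j l (Ne.symm hlj))
    -- cyclic trace identities
    have c1 : (A i * ⁅A l, A j⁆).trace = -(A l * ⁅A i, A j⁆).trace := by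
      rw [tr_cyc (A i) (A l) (A j), tr_cyc (A j) (A i) (A l), ← mlie_skew,
        Matrix.mul_neg, trace_neg]
    have c2 : (A j * ⁅A i, A l⁆).trace = -(A l * ⁅A i, A j⁆).trace := by
      rw [tr_cyc (A j) (A i) (A l), ← mlie_skew, Matrix.mul_neg, trace_neg]
    -- the k = l generic term
    have e3 : (A l * ⁅(t i - t l)⁻¹ • A i, (t j - t l)⁻¹ • A j⁆).trace
        = ((t i - t l)⁻¹ * (t j - t l)⁻¹) * (A l * ⁅A i, A j⁆).trace := by
      simp only [msmul_lie, mlie_smul, mul_smul_comm, trace_smul, smul_eq_mul,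
        smul_smul]
      ring
    rw [hD i l, if_neg hli, hD j l, if_neg hlj, e3, c1, c2]
    have hc : (t i - t l)⁻¹ * (t j - t i)⁻¹ * -(1:ℂ)
        + (t i - t j)⁻¹ * (t j - t l)⁻¹ * -1
        + (t i - t l)⁻¹ * (t j - t l)⁻¹ = 0 := by
      have htji : t j - t i ≠ 0 := sub_ne_zero.2 (ht j i hji)
      field_simp
      ring
    linear_combination ((A l * ⁅A i, A j⁆).trace) * hc
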